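/- Fix N ∈ ℕ, N ≥ 2, and assume f : [0,1] × ℝ → ℝ has continuous partial derivative f_x with respect to the second variable satisfying D(f_x): inf over [0,1] × ℝ of f_x is > −1. Then for every x ∈ 𝔼_N the linear operator D_N′(x) on 𝔼_N, given by D_N′(x)h(k) = Δ²h(k−1) − (1/N²) f_x(k/N, x(k)) h(k) for k = 1,…,N−1 (and 0 at k = 0, N), is invertible; equivalently, for every a ∈ 𝔼_N there exists exactly one h ∈ 𝔼_N with D_N′(x)h = a. -/

import Mathlib

/-- The space `𝔼_N` of functions `x : {0,…,N} → ℝ` with `x(0) = x(N) = 0` is identified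
with `ℝ^{N−1}` via the interior values `x(1),…,x(N−1)`; `ext N x k` recovers `x(k)` for
`k ∈ ℤ` (extending by `0` at the boundary and outside `{0,…,N}`).  With this
identification the Euclidean norm of `ℝ^{N−1}` is exactly `‖x‖_N`. -/
noncomputable def ext (N : ℕ) (x : EuclideanSpace ℝ (Fin (N-1))) (k : ℤ) : ℝ :=
  if h : 1 ≤ k ∧ k ≤ (N:ℤ) - 1 then x ⟨(k-1).toNat, by omega⟩ else 0

/-- The operator `D_N : 𝔼_N → 𝔼_N`,
`(D_N x)(k) = Δ²x(k−1) − (1/N²) f(k/N, x(k))` for `k = 1,…,N−1`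
(and `0` at `k = 0, N`), written on interior indices `k = i + 1`, `i : Fin (N−1)`. -/
noncomputable def DN (N : ℕ) (f : ℝ → ℝ → ℝ) (x : EuclideanSpace ℝ (Fin (N-1))) :
    EuclideanSpace ℝ (Fin (N-1)) :=
  WithLp.toLp 2 fun (i : Fin (N-1)) => ext N x ((i:ℕ)+2) - 2 * ext N x ((i:ℕ)+1) + ext N x (i:ℕ)
    - (1/(N:ℝ)^2) * f ((((i:ℕ):ℝ)+1)/(N:ℝ)) (ext N x ((i:ℕ)+1))

lemma ext_add (N : ℕ) (x y : EuclideanSpace ℝ (Fin (N-1))) (k : ℤ) :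
    ext N (x + y) k = ext N x k + ext N y k := by
  unfold ext; split <;> simp [PiLp.add_apply]

lemma ext_smul (N : ℕ) (r : ℝ) (x : EuclideanSpace ℝ (Fin (N-1))) (k : ℤ) :
    ext N (r • x) k = r * ext N x k := by
  unfold ext; split <;> simp [PiLp.smul_apply]

lemma ext_interior (N : ℕ) (x : EuclideanSpace ℝ (Fin (N-1))) (i : Fin (N-1)) :
    ext N x (((i:ℕ):ℤ)+1) = x i := by
  have hi := i.isLt
  have hN : 1 ≤ N := by omega
  unfold ext
  rw [dif_pos (by omega)]
  have h1 : ((((i:ℕ):ℤ)+1)-1).toNat = (i:ℕ) := by omega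
  exact congrArg x (Fin.ext h1)

lemma ext_out (N : ℕ) (x : EuclideanSpace ℝ (Fin (N-1))) (k : ℤ)
    (hk : ¬(1 ≤ k ∧ k ≤ (N:ℤ) - 1)) : ext N x k = 0 := dif_neg hk

/-- The linearization `D_N′(x)` as a linear map. -/
noncomputable def Lop (N : ℕ) (fx : ℝ → ℝ → ℝ) (x : EuclideanSpace ℝ (Fin (N-1))) :
    EuclideanSpace ℝ (Fin (N-1)) →ₗ[ℝ] EuclideanSpace ℝ (Fin (N-1)) where
  toFun h := WithLp.toLp 2 fun (i : Fin (N-1)) => ext N h ((i:ℕ)+2) - 2 * ext N h ((i:ℕ)+1) + ext N h (i:ℕ)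
    - (1/(N:ℝ)^2) * fx ((((i:ℕ):ℝ)+1)/(N:ℝ)) (ext N x ((i:ℕ)+1)) * ext N h ((i:ℕ)+1)
  map_add' u v := by
    ext i
    simp only [ext_add, PiLp.add_apply, PiLp.toLp_apply]
    ring
  map_smul' r u := by
    ext i
    simp only [ext_smul, PiLp.toLp_apply, PiLp.smul_apply, smul_eq_mul, RingHom.id_apply]
    ring

lemma Lop_apply (N : ℕ) (fx : ℝ → ℝ → ℝ) (x h : EuclideanSpace ℝ (Fin (N-1)))
    (i : Fin (N-1)) :
    Lop N fx x h i = ext N h ((i:ℕ)+2) - 2 * ext N h ((i:ℕ)+1) + ext N h (i:ℕ)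
      - (1/(N:ℝ)^2) * fx ((((i:ℕ):ℝ)+1)/(N:ℝ)) (ext N x ((i:ℕ)+1)) * ext N h ((i:ℕ)+1) :=
  rfl

/-- Injectivity of `D_N′(x)` under the lower bound on the diagonal coefficients. -/
lemma Lop_inj (N : ℕ) (hN : 2 ≤ N) (fx : ℝ → ℝ → ℝ) (x : EuclideanSpace ℝ (Fin (N-1)))
    (m : ℝ) (hm1 : -1 < m) (hm2 : m < 0)
    (hc : ∀ i : Fin (N-1),
      m / (N:ℝ)^2 ≤ (1/(N:ℝ)^2) * fx ((((i:ℕ):ℝ)+1)/(N:ℝ)) (ext N x ((i:ℕ)+1))) :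
    Function.Injective (Lop N fx x) := by
  rw [← LinearMap.ker_eq_bot, LinearMap.ker_eq_bot']
  intro h hh
  set H : ℕ → ℝ := fun k => ext N h (k:ℤ) with hHdef
  have hHext : ∀ k : ℕ, ext N h (k:ℤ) = H k := fun _ => rfl
  have hH0 : H 0 = 0 := by
    rw [← hHext]; apply ext_out; omega
  have hHN : H N = 0 := by
    rw [← hHext]; apply ext_out; omega
  have hHi : ∀ i : Fin (N-1), H ((i:ℕ)+1) = h i := by
    intro i
    rw [← hHext]
    rw [show (((i:ℕ)+1 : ℕ) : ℤ) = ((i:ℕ):ℤ)+1 by push_cast; ring]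
    exact ext_interior N h i
  -- the pointwise equation
  have heq : ∀ j, ∀ hj : j < N - 1, ∃ C : ℝ, m / (N:ℝ)^2 ≤ C ∧
      H (j+2) - 2*H (j+1) + H j = C * H (j+1) := by
    intro j hj
    have h0 : Lop N fx x h ⟨j, hj⟩ = (0 : EuclideanSpace ℝ (Fin (N-1))) ⟨j, hj⟩ := by
      rw [hh]
    rw [Lop_apply] at h0
    simp only [PiLp.zero_apply] at h0
    have eh2 : ext N h (((((⟨j, hj⟩ : Fin (N-1)):ℕ)):ℤ)+2) = H (j+2) := by
      rw [show (((((⟨j, hj⟩ : Fin (N-1)):ℕ)):ℤ)+2) = (((j+2 : ℕ)) : ℤ) by push_cast; ring]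
    have eh1 : ext N h (((((⟨j, hj⟩ : Fin (N-1)):ℕ)):ℤ)+1) = H (j+1) := by
      rw [show (((((⟨j, hj⟩ : Fin (N-1)):ℕ)):ℤ)+1) = (((j+1 : ℕ)) : ℤ) by push_cast; ring]
    have eh0 : ext N h ((((⟨j, hj⟩ : Fin (N-1)):ℕ)):ℤ) = H j := hHext _
    rw [eh2, eh1, eh0] at h0
    exact ⟨_, hc ⟨j, hj⟩, by linarith [h0]⟩
  set D := ∑ k ∈ Finset.range N, (H (k+1) - H k)^2 with hD
  set S := ∑ j ∈ Finset.range (N-1), H (j+1)^2 with hS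
  have hDnn : 0 ≤ D := Finset.sum_nonneg fun _ _ => sq_nonneg _
  have hSnn : 0 ≤ S := Finset.sum_nonneg fun _ _ => sq_nonneg _
  have hN1 : N - 1 + 1 = N := by omega
  -- summation by parts: ∑ T = -D
  have tel := Finset.sum_range_sub (fun k => H (k+1) * H k - H k ^ 2) (N-1)
  rw [hN1] at tel
  have stepA : ∑ j ∈ Finset.range (N-1), (H (j+2) - 2*H (j+1) + H j) * H (j+1) = -D := by
    have expand : ∀ j ∈ Finset.range (N-1),
        (H (j+1+1) * H (j+1) - H (j+1)^2) - (H (j+1) * H j - H j^2)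
          = (H (j+2) - 2*H (j+1) + H j) * H (j+1) + (H (j+1) - H j)^2 := by
      intro j _
      have e : j+1+1 = j+2 := rfl
      rw [e]; ring
    rw [Finset.sum_congr rfl expand, Finset.sum_add_distrib] at tel
    have hDsplit : D = (∑ k ∈ Finset.range (N-1), (H (k+1) - H k)^2) + (H N - H (N-1))^2 := by
      rw [hD, ← hN1, Finset.sum_range_succ, hN1]
    have hq : (H N - H (N-1))^2 = H (N-1)^2 := by rw [hHN]; ring
    have hr : (H N * H (N-1) - H (N-1)^2) - (H 1 * H 0 - H 0 ^ 2) = -H (N-1)^2 := by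
      rw [hHN, hH0]; ring
    rw [show (0:ℕ)+1 = 1 from rfl] at tel
    linarith [tel, hDsplit, hq, hr]
  -- lower bound: ∑ T ≥ (m/N²) S
  have hN2 : (0:ℝ) < (N:ℝ)^2 := by positivity
  have stepC : (m/(N:ℝ)^2) * S ≤ ∑ j ∈ Finset.range (N-1), (H (j+2) - 2*H (j+1) + H j) * H (j+1) := by
    rw [hS, Finset.mul_sum]
    apply Finset.sum_le_sum
    intro j hj
    have hj' : j < N-1 := Finset.mem_range.mp hj
    obtain ⟨C, hC1, hC2⟩ := heq j hj'
    rw [hC2]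
    nlinarith [sq_nonneg (H (j+1)), hC1]
  -- Poincaré: S ≤ (N-1)² D
  have hcast : ((N-1:ℕ):ℝ) = (N:ℝ) - 1 := by
    have h1 : (1:ℕ) ≤ N := by omega
    push_cast [h1]
    ring
  have hN1R : (1:ℝ) ≤ (N:ℝ) := by exact_mod_cast (by omega : 1 ≤ N)
  have stepB : S ≤ ((N:ℝ)-1)^2 * D := by
    have hb : ∀ j ∈ Finset.range (N-1), H (j+1)^2 ≤ ((N:ℝ)-1) * D := by
      intro j hj
      have hj' : j < N-1 := Finset.mem_range.mp hj
      have hsum : H (j+1) = ∑ k ∈ Finset.range (j+1), (H (k+1) - H k) := by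
        rw [Finset.sum_range_sub, hH0, sub_zero]
      have hcs := sq_sum_le_card_mul_sum_sq
        (s := Finset.range (j+1)) (f := fun k => H (k+1) - H k)
      rw [Finset.card_range] at hcs
      have hmono : ∑ k ∈ Finset.range (j+1), (H (k+1) - H k)^2 ≤ D := by
        rw [hD]
        apply Finset.sum_le_sum_of_subset_of_nonneg
        · exact Finset.range_subset_range.mpr (by omega)
        · intro k _ _; exact sq_nonneg _
      have h1 : ((j+1:ℕ):ℝ) ≤ (N:ℝ) - 1 := by
        have h2 : (j+1:ℕ) ≤ N-1 := by omega
        have h3 : ((j+1:ℕ):ℝ) ≤ ((N-1:ℕ):ℝ) := by exact_mod_cast h2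
        linarith [hcast ▸ h3]
      have hsnn : 0 ≤ ∑ k ∈ Finset.range (j+1), (H (k+1) - H k)^2 :=
        Finset.sum_nonneg fun _ _ => sq_nonneg _
      calc H (j+1)^2 = (∑ k ∈ Finset.range (j+1), (H (k+1) - H k))^2 := by rw [hsum]
        _ ≤ ((j+1:ℕ):ℝ) * ∑ k ∈ Finset.range (j+1), (H (k+1) - H k)^2 := hcs
        _ ≤ ((N:ℝ)-1) * D := by
            apply mul_le_mul h1 hmono hsnn (by linarith)
    calc S ≤ ∑ _j ∈ Finset.range (N-1), ((N:ℝ)-1) * D := Finset.sum_le_sum hb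
      _ = ((N-1:ℕ):ℝ) * (((N:ℝ)-1) * D) := by
          rw [Finset.sum_const, Finset.card_range, nsmul_eq_mul]
      _ = ((N:ℝ)-1)^2 * D := by rw [hcast]; ring
  -- combine
  have hC2 : m / (N:ℝ)^2 * S ≤ -D := by rw [← stepA]; exact stepC
  have hC3 : (N:ℝ)^2 * D ≤ (-m) * S := by
    rw [div_mul_eq_mul_div, div_le_iff₀ hN2] at hC2
    nlinarith [hC2]
  have hSzero : S = 0 := by
    have P1 : (N:ℝ)^2 * S ≤ (N:ℝ)^2 * (((N:ℝ)-1)^2 * D) :=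
      mul_le_mul_of_nonneg_left stepB (le_of_lt hN2)
    have P2 : ((N:ℝ)-1)^2 * ((N:ℝ)^2 * D) ≤ ((N:ℝ)-1)^2 * ((-m) * S) :=
      mul_le_mul_of_nonneg_left hC3 (sq_nonneg _)
    have P3 : (-m) * S ≤ 1 * S :=
      mul_le_mul_of_nonneg_right (by linarith) hSnn
    have P3' : ((N:ℝ)-1)^2 * ((-m) * S) ≤ ((N:ℝ)-1)^2 * (1 * S) :=
      mul_le_mul_of_nonneg_left P3 (sq_nonneg _)
    have hfin : S ≤ 0 := by nlinarith [P1, P2, P3', hSnn, hDnn, hN1R]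
    linarith
  have hzero : ∀ j ∈ Finset.range (N-1), H (j+1)^2 = 0 := by
    apply (Finset.sum_eq_zero_iff_of_nonneg (fun j _ => sq_nonneg _)).mp
    rw [← hS]; exact hSzero
  ext i
  have hz := hzero (i:ℕ) (Finset.mem_range.mpr i.isLt)
  have hz' : H ((i:ℕ)+1) = 0 := by
    have := sq_eq_zero_iff.mp hz
    exact this
  show h i = (0 : EuclideanSpace ℝ (Fin (N-1))) i
  rw [← hHi i, hz']
  simp

/-- Under D(f_x) (`f_x` continuous with `inf f_x > −1`), for every `x ∈ 𝔼_N` the linear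
operator `D_N′(x)`, `h ↦ (Δ²h(k−1) − (1/N²) f_x(k/N, x(k)) h(k))_{k=1,…,N−1}`, is
invertible: for every `a ∈ 𝔼_N` there exists exactly one `h ∈ 𝔼_N` with
`D_N′(x) h = a`. -/
theorem DN_derivative_invertible
    (N : ℕ) (hN : 2 ≤ N) (f fx : ℝ → ℝ → ℝ)
    (hfx_deriv : ∀ t ∈ Set.Icc (0:ℝ) 1, ∀ z : ℝ, HasDerivAt (fun w => f t w) (fx t z) z)
    (hfx_cont : ContinuousOn (fun p : ℝ × ℝ => fx p.1 p.2) (Set.Icc 0 1 ×ˢ Set.univ))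
    (hfx_lb : ∃ m : ℝ, -1 < m ∧ ∀ t ∈ Set.Icc (0:ℝ) 1, ∀ z : ℝ, m ≤ fx t z) :
    ∀ x a : EuclideanSpace ℝ (Fin (N-1)),
      ∃! h : EuclideanSpace ℝ (Fin (N-1)),
        ∀ i : Fin (N-1),
          ext N h ((i:ℕ)+2) - 2 * ext N h ((i:ℕ)+1) + ext N h (i:ℕ)
            - (1/(N:ℝ)^2) * fx ((((i:ℕ):ℝ)+1)/(N:ℝ)) (ext N x ((i:ℕ)+1))
              * ext N h ((i:ℕ)+1) = a i := by
  obtain ⟨m₀, hm₀, hm₀lb⟩ := hfx_lb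
  set m : ℝ := min m₀ (-1/2) with hmdef
  have hm1 : -1 < m := lt_min hm₀ (by norm_num)
  have hm2 : m < 0 := lt_of_le_of_lt (min_le_right _ _) (by norm_num)
  have hmlb : ∀ t ∈ Set.Icc (0:ℝ) 1, ∀ z : ℝ, m ≤ fx t z :=
    fun t ht z => le_trans (min_le_left _ _) (hm₀lb t ht z)
  intro x a
  have hNR : (0:ℝ) < (N:ℝ) := by
    have : (0:ℕ) < N := by omega
    exact_mod_cast this
  have hN2 : (0:ℝ) < (N:ℝ)^2 := by positivity
  have hc : ∀ i : Fin (N-1),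
      m / (N:ℝ)^2 ≤ (1/(N:ℝ)^2) * fx ((((i:ℕ):ℝ)+1)/(N:ℝ)) (ext N x ((i:ℕ)+1)) := by
    intro i
    have hi := i.isLt
    have ht0 : (0:ℝ) ≤ (((i:ℕ):ℝ)+1)/(N:ℝ) := by positivity
    have ht1 : (((i:ℕ):ℝ)+1)/(N:ℝ) ≤ 1 := by
      rw [div_le_one hNR]
      have : (i:ℕ)+1 ≤ N := by omega
      exact_mod_cast this
    have hb := hmlb _ ⟨ht0, ht1⟩ (ext N x ((i:ℕ)+1))
    rw [div_eq_mul_one_div m ((N:ℝ)^2), mul_comm m]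
    apply mul_le_mul_of_nonneg_left hb (by positivity)
  have hinj : Function.Injective (Lop N fx x) := Lop_inj N hN fx x m hm1 hm2 hc
  have hsurj : Function.Surjective (Lop N fx x) := LinearMap.injective_iff_surjective.mp hinj
  obtain ⟨h, hLh⟩ := hsurj a
  refine ⟨h, ?_, ?_⟩
  · intro i
    rw [← Lop_apply N fx x h i, hLh]
  · intro g hg
    apply hinj
    rw [hLh]
    ext i
    rw [Lop_apply]
    exact hg i
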